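/- Let (N, q) be a nondegenerate quadratic space of even dimension 2m+2 over a field k of characteristic 0, and let Λ, Λ′ ⊂ N be two Lagrangian (maximal isotropic) subspaces with dim(Λ ∩ Λ′) = m. Choose bases e_1,…,e_{m+1} of Λ and e_{m+2},…,e_{2m+2} with b(e_i, e_{j+m+1}) = δ_{ij}, yielding η_Λ = e_1 ∧ ⋯ ∧ e_{2m+2} ∈ det N, and similarly η_{Λ′}. Then η_Λ = −η_{Λ′}. -/

import Mathlib

open Module LinearMap Submodule

namespace LagrangianSign

variable {k N M' : Type*} [Field k] [AddCommGroup N] [Module k N]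
  [AddCommGroup M'] [Module k M']


theorem altmap_apply_eq {ι : Type*} [Fintype ι] [DecidableEq ι]
    (F : N [⋀^ι]→ₗ[k] M') (B : Basis ι k N) (v : ι → N) :
    F v = B.det v • F ⇑B := by
  have h : F = (LinearMap.toSpanSingleton k M' (F ⇑B)).compAlternatingMap B.det := by
    refine Basis.ext_alternating B fun i hi => ?_
    let σ : Equiv.Perm ι := Equiv.ofBijective i (Finite.injective_iff_bijective.1 hi)
    change F (⇑B ∘ σ) = (LinearMap.toSpanSingleton k M' (F ⇑B)).compAlternatingMap B.det (⇑B ∘ σ)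
    simp [AlternatingMap.map_perm, Basis.det_self, LinearMap.toSpanSingleton_apply]
  rw [h]
  simp [LinearMap.toSpanSingleton_apply, Basis.det_self]

theorem bilin_expand {ι : Type*} [Fintype ι] (B : Basis ι k N)
    (b : LinearMap.BilinForm k N) (x y : N) :
    b x y = ∑ s, ∑ t, B.repr x s * (B.repr y t * b (B s) (B t)) := by
  conv_lhs => rw [← B.sum_repr x, ← B.sum_repr y]
  simp only [map_sum, map_smul, LinearMap.sum_apply, LinearMap.smul_apply, smul_eq_mul]
  simp only [Finset.mul_sum]
  rw [Finset.sum_comm]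
  exact Finset.sum_congr rfl fun s _ => Finset.sum_congr rfl fun t _ => by ring

/-- A family adapted to a Lagrangian `Λ` : the left half is a basis of `Λ`, and the right
half is dual to it under the polar form. -/
structure Adapted (m : ℕ) (q : QuadraticForm k N) (Λ : Submodule k N)
    (g : Fin (m + 1) ⊕ Fin (m + 1) → N) : Prop where
  ind : LinearIndependent k fun i => g (Sum.inl i)
  span_eq : Submodule.span k (Set.range fun i => g (Sum.inl i)) = Λ
  dual : ∀ i j, QuadraticMap.polarBilin q (g (Sum.inl i)) (g (Sum.inr j))
    = if i = j then 1 else 0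

theorem polar_eq_zero_of_mem {q : QuadraticForm k N} {Λ : Submodule k N}
    (hiso : ∀ x ∈ Λ, q x = 0) {x y : N} (hx : x ∈ Λ) (hy : y ∈ Λ) :
    QuadraticMap.polarBilin q x y = 0 := by
  simp [QuadraticMap.polarBilin_apply_apply, QuadraticMap.polar,
    hiso _ hx, hiso _ hy, hiso _ (add_mem hx hy)]

theorem Adapted.mem_left {m : ℕ} {q : QuadraticForm k N} {Λ : Submodule k N}
    {g : Fin (m + 1) ⊕ Fin (m + 1) → N} (hg : Adapted m q Λ g) (i : Fin (m + 1)) :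
    g (Sum.inl i) ∈ Λ :=
  hg.span_eq ▸ Submodule.subset_span ⟨i, rfl⟩

theorem Adapted.linearIndependent {m : ℕ} {q : QuadraticForm k N} {Λ : Submodule k N}
    {g : Fin (m + 1) ⊕ Fin (m + 1) → N} (hiso : ∀ x ∈ Λ, q x = 0)
    (hg : Adapted m q Λ g) : LinearIndependent k g := by
  classical
  rw [Fintype.linearIndependent_iff]
  intro c hc
  have h0 : ∀ i : Fin (m + 1), c (Sum.inr i) = 0 := by
    intro i
    have h := congrArg (fun x => QuadraticMap.polarBilin q (g (Sum.inl i)) x) hc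
    simp only [map_sum, map_smul, smul_eq_mul, map_zero] at h
    rw [Fintype.sum_sum_type] at h
    have h1 : ∀ j : Fin (m + 1),
        c (Sum.inl j) * QuadraticMap.polarBilin q (g (Sum.inl i)) (g (Sum.inl j)) = 0 := by
      intro j
      rw [polar_eq_zero_of_mem hiso (hg.mem_left i) (hg.mem_left j), mul_zero]
    rw [Finset.sum_congr rfl fun j _ => h1 j, Finset.sum_const_zero, zero_add] at h
    have h2 : ∀ j : Fin (m + 1),
        c (Sum.inr j) * QuadraticMap.polarBilin q (g (Sum.inl i)) (g (Sum.inr j))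
          = if i = j then c (Sum.inr j) else 0 := by
      intro j
      rw [hg.dual i j]
      split <;> simp
    rw [Finset.sum_congr rfl fun j _ => h2 j, Finset.sum_ite_eq] at h
    simpa using h
  have hsum : ∑ j : Fin (m + 1), c (Sum.inl j) • g (Sum.inl j) = 0 := by
    rw [Fintype.sum_sum_type] at hc
    have : ∑ j : Fin (m + 1), c (Sum.inr j) • g (Sum.inr j) = 0 := by
      refine Finset.sum_eq_zero fun j _ => ?_
      rw [h0 j, zero_smul]
    rw [this, add_zero] at hc
    exact hc
  have h1 := Fintype.linearIndependent_iff.mp hg.ind _ hsum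
  rintro (i | i)
  · exact h1 i
  · exact h0 i



theorem det_adapted_eq_one {m : ℕ} {q : QuadraticForm k N} {Λ : Submodule k N}
    (hiso : ∀ x ∈ Λ, q x = 0) {g h : Fin (m + 1) ⊕ Fin (m + 1) → N}
    (hg : Adapted m q Λ g) (hh : Adapted m q Λ h)
    (B : Basis (Fin (m + 1) ⊕ Fin (m + 1)) k N) (hB : ⇑B = h) :
    B.det g = 1 := by
  classical
  have hrepr0 : ∀ (i l : Fin (m + 1)), B.repr (g (Sum.inl i)) (Sum.inr l) = 0 := by
    intro i l
    have hmem : g (Sum.inl i) ∈ span k (⇑B '' Set.range Sum.inl) := by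
      rw [hB]
      have himg : (h '' Set.range Sum.inl) = Set.range fun i => h (Sum.inl i) := by
        rw [← Set.range_comp]; rfl
      rw [himg, hh.span_eq]
      exact hg.mem_left i
    have hsupp := (Basis.mem_span_image B).mp hmem
    by_contra hne
    obtain ⟨t, ht⟩ := hsupp (Finsupp.mem_support_iff.mpr hne)
    exact Sum.inl_ne_inr ht
  have key : ∀ i j : Fin (m + 1),
      (∑ l, B.repr (g (Sum.inl i)) (Sum.inl l) * B.repr (g (Sum.inr j)) (Sum.inr l))
        = if i = j then 1 else 0 := by
    intro i j
    have hexp := bilin_expand B (QuadraticMap.polarBilin q) (g (Sum.inl i)) (g (Sum.inr j))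
    rw [hg.dual i j] at hexp
    have e1 : ∀ l : Fin (m + 1), ∑ t, B.repr (g (Sum.inl i)) (Sum.inr l) *
        (B.repr (g (Sum.inr j)) t * QuadraticMap.polarBilin q (B (Sum.inr l)) (B t)) = 0 := by
      intro l
      exact Finset.sum_eq_zero fun t _ => by rw [hrepr0, zero_mul]
    have e2 : ∀ l : Fin (m + 1), ∑ t, B.repr (g (Sum.inl i)) (Sum.inl l) *
        (B.repr (g (Sum.inr j)) t * QuadraticMap.polarBilin q (B (Sum.inl l)) (B t))
        = B.repr (g (Sum.inl i)) (Sum.inl l) * B.repr (g (Sum.inr j)) (Sum.inr l) := by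
      intro l
      rw [Fintype.sum_sum_type]
      have z : ∑ t : Fin (m + 1), B.repr (g (Sum.inl i)) (Sum.inl l) *
          (B.repr (g (Sum.inr j)) (Sum.inl t) *
            QuadraticMap.polarBilin q (B (Sum.inl l)) (B (Sum.inl t))) = 0 :=
        Finset.sum_eq_zero fun t _ => by
          rw [hB, polar_eq_zero_of_mem hiso (hh.mem_left l) (hh.mem_left t), mul_zero, mul_zero]
      rw [z, zero_add]
      have e3 : ∀ t : Fin (m + 1), B.repr (g (Sum.inl i)) (Sum.inl l) *
          (B.repr (g (Sum.inr j)) (Sum.inr t) *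
            QuadraticMap.polarBilin q (B (Sum.inl l)) (B (Sum.inr t)))
          = if l = t then
              B.repr (g (Sum.inl i)) (Sum.inl l) * B.repr (g (Sum.inr j)) (Sum.inr t) else 0 := by
        intro t
        rw [hB, hh.dual l t]
        split <;> simp
      rw [Finset.sum_congr rfl fun t _ => e3 t, Finset.sum_ite_eq]
      simp
    rw [Fintype.sum_sum_type, Finset.sum_congr rfl fun l _ => e2 l,
        Finset.sum_congr rfl fun l _ => e1 l, Finset.sum_const_zero, add_zero] at hexp
    exact hexp.symm
  rw [Basis.det_apply]
  have hblock : (B.toMatrix g).toBlocks₂₁ = 0 := by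
    ext l i
    simpa [Matrix.toBlocks₂₁, Basis.toMatrix_apply] using hrepr0 i l
  have hdet : (B.toMatrix g).det
      = (B.toMatrix g).toBlocks₁₁.det * (B.toMatrix g).toBlocks₂₂.det := by
    conv_lhs => rw [← Matrix.fromBlocks_toBlocks (B.toMatrix g), hblock]
    rw [Matrix.det_fromBlocks_zero₂₁]
  have hmm : (B.toMatrix g).toBlocks₁₁.transpose * (B.toMatrix g).toBlocks₂₂ = 1 := by
    ext i j
    rw [Matrix.mul_apply]
    simpa [Matrix.transpose_apply, Matrix.toBlocks₁₁, Matrix.toBlocks₂₂,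
      Basis.toMatrix_apply, Matrix.one_apply] using key i j
  have hone := congrArg Matrix.det hmm
  rw [Matrix.det_mul, Matrix.det_transpose, Matrix.det_one] at hone
  rw [hdet, hone]

theorem exists_adapted_pair {m : ℕ} (hdim : finrank k N = 2 * m + 2)
    {q : QuadraticForm k N} (hq : LinearMap.BilinForm.Nondegenerate (QuadraticMap.polarBilin q))
    {Λ Λ' : Submodule k N}
    (hΛiso : ∀ x ∈ Λ, q x = 0) (hΛ'iso : ∀ x ∈ Λ', q x = 0)
    (hΛdim : finrank k Λ = m + 1) (hΛ'dim : finrank k Λ' = m + 1)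
    (hint : finrank k ↥(Λ ⊓ Λ') = m) :
    ∃ g g' : Fin (m + 1) ⊕ Fin (m + 1) → N, Adapted m q Λ g ∧ Adapted m q Λ' g' ∧
      g' = g ∘ Equiv.swap (Sum.inl (Fin.last m)) (Sum.inr (Fin.last m)) := by
  classical
  haveI : FiniteDimensional k N := Module.finite_of_finrank_pos (by omega)
  set b : LinearMap.BilinForm k N := QuadraticMap.polarBilin q with hbdef
  have hsymm : ∀ x y : N, b x y = b y x := fun x y => QuadraticMap.polar_comm (⇑q) x y
  have hrefl : b.IsRefl := fun x y h => by rw [hsymm y x]; exact h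
  -- basis of the intersection
  let wB := finBasisOfFinrankEq k ↥(Λ ⊓ Λ') hint
  let wv : Fin m → N := fun i => ((wB i : ↥(Λ ⊓ Λ')) : N)
  have hwv_mem : ∀ i, wv i ∈ Λ ⊓ Λ' := fun i => (wB i).2
  have hwv_ind : LinearIndependent k wv :=
    wB.linearIndependent.map' (Λ ⊓ Λ').subtype (ker_subtype _)
  have hwv_span : span k (Set.range wv) = Λ ⊓ Λ' := by
    have h1 : Set.range wv = (Λ ⊓ Λ').subtype '' Set.range wB := by
      rw [← Set.range_comp]; rfl
    rw [h1, Submodule.span_image, wB.span_eq, Submodule.map_top, Submodule.range_subtype]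
  -- u ∈ Λ \ Λ'
  have hΛneq : ¬ Λ ≤ Λ' := by
    intro hle
    have h2 : Λ ⊓ Λ' = Λ := inf_eq_left.mpr hle
    rw [h2, hΛdim] at hint; omega
  obtain ⟨u, huΛ, huΛ'⟩ := SetLike.not_le_iff_exists.mp hΛneq
  -- v0 ∈ Λ' \ Λ
  have hΛ'neq : ¬ Λ' ≤ Λ := by
    intro hle
    have h2 : Λ ⊓ Λ' = Λ' := inf_eq_right.mpr hle
    rw [h2, hΛ'dim] at hint; omega
  obtain ⟨v0, hv0Λ', hv0Λ⟩ := SetLike.not_le_iff_exists.mp hΛ'neq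
  -- left half for Λ
  have hu_not : u ∉ span k (Set.range wv) := by
    rw [hwv_span]; exact fun h => huΛ' h.2
  have hgLu_ind : LinearIndependent k (Fin.snoc wv u : Fin (m + 1) → N) :=
    linearIndependent_fin_snoc.mpr ⟨hwv_ind, hu_not⟩
  have hgLu_mem : ∀ i, (Fin.snoc wv u : Fin (m + 1) → N) i ∈ Λ := by
    intro i
    refine Fin.lastCases ?_ (fun j => ?_) i
    · rw [Fin.snoc_last]; exact huΛ
    · rw [Fin.snoc_castSucc]; exact (hwv_mem j).1
  have hgLu_span : span k (Set.range (Fin.snoc wv u : Fin (m + 1) → N)) = Λ := by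
    apply Submodule.eq_of_le_of_finrank_le
    · rw [span_le]; rintro x ⟨i, rfl⟩; exact hgLu_mem i
    · rw [hΛdim, finrank_span_eq_card hgLu_ind, Fintype.card_fin]
  -- orthogonal of Λ is Λ
  have horthΛ : b.orthogonal Λ = Λ := by
    have hle : Λ ≤ b.orthogonal Λ := by
      intro x hx
      rw [LinearMap.BilinForm.mem_orthogonal_iff]
      intro y hy
      exact polar_eq_zero_of_mem hΛiso hy hx
    refine (Submodule.eq_of_le_of_finrank_le hle ?_).symm
    rw [LinearMap.BilinForm.finrank_orthogonal hq, hdim, hΛdim]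
    omega
  -- b u v0 ≠ 0
  have hc : b u v0 ≠ 0 := by
    intro hc0
    apply hv0Λ
    have hsub : span k (Set.range (Fin.snoc wv u : Fin (m + 1) → N))
        ≤ LinearMap.ker (b.flip v0) := by
      rw [span_le]
      rintro x ⟨i, rfl⟩
      rw [SetLike.mem_coe, LinearMap.mem_ker]
      refine Fin.lastCases ?_ (fun j => ?_) i
      · rw [Fin.snoc_last]
        simpa [LinearMap.flip_apply] using hc0
      · rw [Fin.snoc_castSucc]
        simpa [LinearMap.flip_apply, hbdef] using
          polar_eq_zero_of_mem hΛ'iso (hwv_mem j).2 hv0Λ'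
    have hv0orth : v0 ∈ b.orthogonal Λ := by
      rw [LinearMap.BilinForm.mem_orthogonal_iff]
      intro y hy
      have hy' : y ∈ LinearMap.ker (b.flip v0) := hsub (hgLu_span ▸ hy : y ∈ _)
      simpa [LinearMap.flip_apply] using hy'
    rw [horthΛ] at hv0orth
    exact hv0orth
  set c : k := b u v0 with hcdef
  set v : N := c⁻¹ • v0 with hvdef
  have hvΛ' : v ∈ Λ' := Submodule.smul_mem _ _ hv0Λ'
  have hvΛ : v ∉ Λ := by
    intro h
    apply hv0Λ
    have h2 : c • v = v0 := by rw [hvdef, smul_smul, mul_inv_cancel₀ hc, one_smul]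
    rw [← h2]; exact Submodule.smul_mem _ _ h
  have huv : b u v = 1 := by
    rw [hvdef, map_smul, smul_eq_mul, ← hcdef, inv_mul_cancel₀ hc]
  have hwv_v : ∀ i : Fin m, b (wv i) v = 0 := by
    intro i
    rw [hvdef, map_smul, smul_eq_mul,
      polar_eq_zero_of_mem hΛ'iso (hwv_mem i).2 hv0Λ', mul_zero]
  -- the auxiliary family t and dual functionals
  have hv_not : v ∉ span k (Set.range (Fin.snoc wv u : Fin (m + 1) → N)) := by
    rw [hgLu_span]; exact hvΛ
  set t : Fin (m + 2) → N := Fin.snoc (Fin.snoc wv u) v with htdef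
  have ht_ind : LinearIndependent k t :=
    linearIndependent_fin_snoc.mpr ⟨hgLu_ind, hv_not⟩
  set S := span k (Set.range t) with hSdef
  let Bt : Basis (Fin (m + 2)) k S := Basis.span ht_ind
  obtain ⟨T, hT⟩ := Submodule.exists_isCompl S
  let π := Submodule.linearProjOfIsCompl S T hT
  let φ : Fin (m + 2) → Module.Dual k N := fun i => (Bt.coord i).comp π
  have hφ : ∀ i j : Fin (m + 2), φ i (t j) = if j = i then 1 else 0 := by
    intro i j
    have htj : t j ∈ S := subset_span ⟨j, rfl⟩
    have hproj : π (t j) = ⟨t j, htj⟩ :=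
      Submodule.linearProjOfIsCompl_apply_left hT ⟨t j, htj⟩
    have hBtj : (⟨t j, htj⟩ : S) = Bt j := (Basis.span_apply ht_ind j).symm
    show Bt.coord i (π (t j)) = _
    rw [hproj, hBtj, Basis.coord_apply, Bt.repr_self, Finsupp.single_apply]
  have htu : t (Fin.castSucc (Fin.last m)) = u := by
    rw [htdef, Fin.snoc_castSucc, Fin.snoc_last]
  have htv : t (Fin.last (m + 1)) = v := by rw [htdef, Fin.snoc_last]
  have htw : ∀ i : Fin m, t (Fin.castSucc (Fin.castSucc i)) = wv i := by
    intro i; rw [htdef, Fin.snoc_castSucc, Fin.snoc_castSucc]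
  -- the dual vectors d
  let d : Fin m → N := fun j => (b.toDual hq).symm (φ (Fin.castSucc (Fin.castSucc j)))
  have hbd : ∀ (j : Fin m) (x : N), b (d j) x = φ (Fin.castSucc (Fin.castSucc j)) x :=
    fun j x => LinearMap.BilinForm.apply_toDual_symm_apply _ _
  have hdb : ∀ (j : Fin m) (x : N), b x (d j) = φ (Fin.castSucc (Fin.castSucc j)) x :=
    fun j x => by rw [hsymm]; exact hbd j x
  have hwd : ∀ i : Fin m, ∀ j : Fin m, b (wv i) (d j) = if i = j then 1 else 0 := by
    intro i j
    rw [hdb, ← htw i, hφ]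
    simp [Fin.castSucc_inj]
  have hud : ∀ j : Fin m, b u (d j) = 0 := by
    intro j
    rw [hdb, ← htu, hφ]
    have : Fin.castSucc (Fin.last m) ≠ Fin.castSucc (Fin.castSucc j) := by
      simp only [Ne, Fin.ext_iff, Fin.coe_castSucc, Fin.val_last]
      have := j.isLt; omega
    simp [this]
  have hvd : ∀ j : Fin m, b v (d j) = 0 := by
    intro j
    rw [hdb, ← htv, hφ]
    have : Fin.last (m + 1) ≠ Fin.castSucc (Fin.castSucc j) := by
      simp only [Ne, Fin.ext_iff, Fin.coe_castSucc, Fin.val_last]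
      have := j.isLt; omega
    simp [this]
  -- left half for Λ'
  have hv_notW : v ∉ span k (Set.range wv) := by
    rw [hwv_span]; exact fun h => hvΛ h.1
  have hgLv_ind : LinearIndependent k (Fin.snoc wv v : Fin (m + 1) → N) :=
    linearIndependent_fin_snoc.mpr ⟨hwv_ind, hv_notW⟩
  have hgLv_mem : ∀ i, (Fin.snoc wv v : Fin (m + 1) → N) i ∈ Λ' := by
    intro i
    refine Fin.lastCases ?_ (fun j => ?_) i
    · rw [Fin.snoc_last]; exact hvΛ'
    · rw [Fin.snoc_castSucc]; exact (hwv_mem j).2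
  have hgLv_span : span k (Set.range (Fin.snoc wv v : Fin (m + 1) → N)) = Λ' := by
    apply Submodule.eq_of_le_of_finrank_le
    · rw [span_le]; rintro x ⟨i, rfl⟩; exact hgLv_mem i
    · rw [hΛ'dim, finrank_span_eq_card hgLv_ind, Fintype.card_fin]
  -- the two families
  refine ⟨Sum.elim (Fin.snoc wv u) (Fin.snoc d v), Sum.elim (Fin.snoc wv v) (Fin.snoc d u),
    ⟨hgLu_ind, hgLu_span, ?_⟩, ⟨hgLv_ind, hgLv_span, ?_⟩, ?_⟩
  · -- duality for g
    intro i j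
    simp only [← hbdef, Sum.elim_inl, Sum.elim_inr]
    refine Fin.lastCases ?_ (fun i0 => ?_) i
    · refine Fin.lastCases ?_ (fun j0 => ?_) j
      · rw [Fin.snoc_last, Fin.snoc_last, huv, if_pos rfl]
      · rw [Fin.snoc_last, Fin.snoc_castSucc, hud j0, if_neg]
        exact fun h => (Fin.castSucc_lt_last j0).ne' h
      -- last ≠ castSucc j0
    · refine Fin.lastCases ?_ (fun j0 => ?_) j
      · rw [Fin.snoc_castSucc, Fin.snoc_last, hwv_v i0, if_neg]
        exact fun h => (Fin.castSucc_lt_last i0).ne h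
      · rw [Fin.snoc_castSucc, Fin.snoc_castSucc, hwd i0 j0]
        simp [Fin.castSucc_inj]
  · -- duality for g'
    intro i j
    simp only [← hbdef, Sum.elim_inl, Sum.elim_inr]
    refine Fin.lastCases ?_ (fun i0 => ?_) i
    · refine Fin.lastCases ?_ (fun j0 => ?_) j
      · rw [Fin.snoc_last, Fin.snoc_last, hsymm, huv, if_pos rfl]
      · rw [Fin.snoc_last, Fin.snoc_castSucc, hvd j0, if_neg]
        exact fun h => (Fin.castSucc_lt_last j0).ne' h
    · refine Fin.lastCases ?_ (fun j0 => ?_) j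
      · rw [Fin.snoc_castSucc, Fin.snoc_last,
          polar_eq_zero_of_mem hΛiso (hwv_mem i0).1 huΛ, if_neg]
        exact fun h => (Fin.castSucc_lt_last i0).ne h
      · rw [Fin.snoc_castSucc, Fin.snoc_castSucc, hwd i0 j0]
        simp [Fin.castSucc_inj]
  · -- swap relation
    funext s
    rcases s with i | i
    · refine Fin.lastCases ?_ (fun i0 => ?_) i
      · rw [Function.comp_apply, Equiv.swap_apply_left]
        simp
      · rw [Function.comp_apply, Equiv.swap_apply_of_ne_of_ne]
        · simp
        · exact fun h => (Fin.castSucc_lt_last i0).ne (Sum.inl_injective h)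
        · simp
    · refine Fin.lastCases ?_ (fun i0 => ?_) i
      · rw [Function.comp_apply, Equiv.swap_apply_right]
        simp
      · rw [Function.comp_apply, Equiv.swap_apply_of_ne_of_ne]
        · simp
        · simp
        · exact fun h => (Fin.castSucc_lt_last i0).ne (Sum.inr_injective h)

theorem adapted_altmap_eq {m : ℕ} {q : QuadraticForm k N} {Λ : Submodule k N}
    (hdim : finrank k N = 2 * m + 2)
    (hiso : ∀ x ∈ Λ, q x = 0) {g h : Fin (m + 1) ⊕ Fin (m + 1) → N}
    (hg : Adapted m q Λ g) (hh : Adapted m q Λ h)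
    (F : N [⋀^(Fin (m + 1) ⊕ Fin (m + 1))]→ₗ[k] M') : F g = F h := by
  classical
  have hcard : Fintype.card (Fin (m + 1) ⊕ Fin (m + 1)) = finrank k N := by
    simp only [Fintype.card_sum, Fintype.card_fin, hdim]; omega
  let B := basisOfLinearIndependentOfCardEqFinrank (hh.linearIndependent hiso) hcard
  have hB : ⇑B = h := coe_basisOfLinearIndependentOfCardEqFinrank _ _
  rw [altmap_apply_eq F B g, hB, det_adapted_eq_one hiso hg hh B hB, one_smul]

theorem key_sign {m : ℕ} (hdim : finrank k N = 2 * m + 2)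
    {q : QuadraticForm k N} (hq : LinearMap.BilinForm.Nondegenerate (QuadraticMap.polarBilin q))
    {Λ Λ' : Submodule k N}
    (hΛiso : ∀ x ∈ Λ, q x = 0) (hΛ'iso : ∀ x ∈ Λ', q x = 0)
    (hΛdim : finrank k Λ = m + 1) (hΛ'dim : finrank k Λ' = m + 1)
    (hint : finrank k ↥(Λ ⊓ Λ') = m)
    {g g' : Fin (m + 1) ⊕ Fin (m + 1) → N}
    (hg : Adapted m q Λ g) (hg' : Adapted m q Λ' g')
    (F : N [⋀^(Fin (m + 1) ⊕ Fin (m + 1))]→ₗ[k] M') :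
    F g = - F g' := by
  classical
  obtain ⟨h, h', hh, hh', hswap⟩ :=
    exists_adapted_pair hdim hq hΛiso hΛ'iso hΛdim hΛ'dim hint
  have e1 : F g = F h := adapted_altmap_eq hdim hΛiso hg hh F
  have e2 : F g' = F h' := adapted_altmap_eq hdim hΛ'iso hg' hh' F
  have e3 : F h' = - F h := by
    rw [hswap]
    exact AlternatingMap.map_swap F h (by simp)
  rw [e1, e2, e3, neg_neg]

end LagrangianSign

/-- Let `(N, q)` be a nondegenerate quadratic space of even dimension `2m+2`
over a field of characteristic `0`, and `Λ, Λ′` two Lagrangian (maximal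
isotropic) subspaces with `dim(Λ ∩ Λ′) = m`.  Choose bases `e_1,…,e_{m+1}` of
`Λ` and vectors `e_{m+2},…,e_{2m+2}` with `b(e_i, e_{j+m+1}) = δ_{ij}`,
giving `η_Λ = e_1 ∧ ⋯ ∧ e_{2m+2} ∈ det N` (realized as a product of
generators in the exterior algebra), and similarly `η_{Λ′}` from `f`.
Then `η_Λ = −η_{Λ′}`. -/
theorem lagrangian_volume_sign
    {k N : Type*} [Field k] [CharZero k] [AddCommGroup N] [Module k N]
    (m : ℕ) (hdim : Module.finrank k N = 2 * m + 2)
    (q : QuadraticForm k N)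
    (hq : LinearMap.BilinForm.Nondegenerate (QuadraticMap.polarBilin q))
    (Λ Λ' : Submodule k N)
    (hΛiso : ∀ x ∈ Λ, q x = 0) (hΛ'iso : ∀ x ∈ Λ', q x = 0)
    (hΛdim : Module.finrank k ↥Λ = m + 1) (hΛ'dim : Module.finrank k ↥Λ' = m + 1)
    (hint : Module.finrank k ↥(Λ ⊓ Λ') = m)
    (e f : Fin (2 * m + 2) → N)
    (heind : LinearIndependent k fun i : Fin (m + 1) => e (Fin.castLE (by omega) i))
    (hespan : Submodule.span k
      (Set.range fun i : Fin (m + 1) => e (Fin.castLE (by omega) i)) = Λ)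
    (hedual : ∀ i j : Fin (m + 1),
      QuadraticMap.polar (⇑q) (e (Fin.castLE (by omega) i))
        (e ⟨(j : ℕ) + (m + 1), by have := j.isLt; omega⟩) = if i = j then 1 else 0)
    (hfind : LinearIndependent k fun i : Fin (m + 1) => f (Fin.castLE (by omega) i))
    (hfspan : Submodule.span k
      (Set.range fun i : Fin (m + 1) => f (Fin.castLE (by omega) i)) = Λ')
    (hfdual : ∀ i j : Fin (m + 1),
      QuadraticMap.polar (⇑q) (f (Fin.castLE (by omega) i))
        (f ⟨(j : ℕ) + (m + 1), by have := j.isLt; omega⟩) = if i = j then 1 else 0) :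
    (List.ofFn fun i => ExteriorAlgebra.ι k (e i)).prod
      = -(List.ofFn fun i => ExteriorAlgebra.ι k (f i)).prod := by
  classical
  let τ : (Fin (m + 1) ⊕ Fin (m + 1)) ≃ Fin (2 * m + 2) :=
    finSumFinEquiv.trans (finCongr (by omega))
  have hτl : ∀ i : Fin (m + 1), τ (Sum.inl i)
      = Fin.castLE (by omega : m + 1 ≤ 2 * m + 2) i := by
    intro i
    apply Fin.ext
    simp [τ]
  have hτr : ∀ j : Fin (m + 1), τ (Sum.inr j)
      = (⟨(j : ℕ) + (m + 1), by have := j.isLt; omega⟩ : Fin (2 * m + 2)) := by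
    intro j
    apply Fin.ext
    simp only [τ, Equiv.trans_apply, finSumFinEquiv_apply_right, finCongr_apply, Fin.coe_cast,
      Fin.coe_natAdd]
    omega
  have hadapted : ∀ (w : Fin (2 * m + 2) → N) (ΛΛ : Submodule k N),
      (LinearIndependent k fun i : Fin (m + 1) => w (Fin.castLE (by omega) i)) →
      (Submodule.span k (Set.range fun i : Fin (m + 1) => w (Fin.castLE (by omega) i)) = ΛΛ) →
      (∀ i j : Fin (m + 1), QuadraticMap.polar (⇑q) (w (Fin.castLE (by omega) i))
        (w ⟨(j : ℕ) + (m + 1), by have := j.isLt; omega⟩) = if i = j then 1 else 0) →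
      LagrangianSign.Adapted m q ΛΛ (w ∘ τ) := by
    intro w ΛΛ hind hspan hdual
    have hfun : (fun i : Fin (m + 1) => (w ∘ τ) (Sum.inl i))
        = fun i : Fin (m + 1) => w (Fin.castLE (by omega) i) := by
      funext i
      simp only [Function.comp_apply, hτl i]
    refine ⟨?_, ?_, ?_⟩
    · rw [hfun]; exact hind
    · rw [hfun]; exact hspan
    · intro i j
      have h1 := hdual i j
      simp only [Function.comp_apply, hτl i, hτr j, QuadraticMap.polarBilin_apply_apply]
      exact h1
  have hge : LagrangianSign.Adapted m q Λ (e ∘ τ) := hadapted e Λ heind hespan hedual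
  have hgf : LagrangianSign.Adapted m q Λ' (f ∘ τ) := hadapted f Λ' hfind hfspan hfdual
  let F : N [⋀^(Fin (m + 1) ⊕ Fin (m + 1))]→ₗ[k] ExteriorAlgebra k N :=
    (ExteriorAlgebra.ιMulti k (2 * m + 2)).domDomCongr τ.symm
  have hF : ∀ w : Fin (2 * m + 2) → N,
      F (w ∘ τ) = (List.ofFn fun i => ExteriorAlgebra.ι k (w i)).prod := by
    intro w
    have h1 : ((w ∘ τ) ∘ ⇑τ.symm) = w := by
      funext i
      simp
    have h2 : F (w ∘ τ) = ExteriorAlgebra.ιMulti k (2 * m + 2) ((w ∘ τ) ∘ ⇑τ.symm) := rfl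
    rw [h2, h1, ExteriorAlgebra.ιMulti_apply]
  have hkey := LagrangianSign.key_sign hdim hq hΛiso hΛ'iso hΛdim hΛ'dim hint hge hgf F
  rw [hF e, hF f] at hkey
  exact hkey
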